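/- Let R be a ring, a ∈ R, and suppose the right ideal (1-a²)R is generated by an idempotent e and is contained in the ideal Rr(a) generated by the right annihilator of a. Then (1-a²)R, as a right R-module, is isomorphic to a direct summand of a finite direct sum of copies of r(a); i.e., (1-a²)R ∝ r(a). -/

import Mathlib

noncomputable section

namespace SepExchange

variable (R : Type) [Ring R]

/-- The right annihilator `r(a)` as a right `R`-submodule of `R`. -/
def rAnn (a : R) : Submodule Rᵐᵒᵖ R where
  carrier := {x | a * x = 0}
  add_mem' := by intro x y hx hy; simp_all [Set.mem_setOf_eq, mul_add]
  zero_mem' := by simp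
  smul_mem' := by
    intro c x hx
    simp only [Set.mem_setOf_eq, MulOpposite.smul_eq_mul_unop] at *
    rw [← mul_assoc, hx, zero_mul]

/-- The principal right ideal `aR` as a right `R`-submodule of `R`. -/
def rIdeal (a : R) : Submodule Rᵐᵒᵖ R := Submodule.span Rᵐᵒᵖ {a}

/-- The right `R`-module `a·r(a²) = {a*t : a²*t = 0}`. -/
def arAnn2 (a : R) : Submodule Rᵐᵒᵖ R where
  carrier := {x | ∃ t, x = a * t ∧ a ^ 2 * t = 0}
  add_mem' := by
    rintro x y ⟨t1, rfl, h1⟩ ⟨t2, rfl, h2⟩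
    exact ⟨t1 + t2, by rw [mul_add], by rw [mul_add, h1, h2, add_zero]⟩
  zero_mem' := ⟨0, by simp, by simp⟩
  smul_mem' := by
    intro c x ⟨t, hx, ht⟩
    subst hx
    refine ⟨t * c.unop, ?_, ?_⟩
    · simp only [MulOpposite.smul_eq_mul_unop, mul_assoc]
    · rw [← mul_assoc, ht, zero_mul]

/-- `R` is an exchange ring: for each `a` there is an idempotent `e ∈ aR`
with `1 - e ∈ (1-a)R`. -/
def ExchangeRing : Prop :=
  ∀ a : R, ∃ e : R, IsIdempotentElem e ∧ (∃ r, e = a * r) ∧ (∃ s, (1 : R) - e = (1 - a) * s)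

/-- `R` is separative: `A⊕A ≅ A⊕B ≅ B⊕B ⟹ A ≅ B` for finitely generated
projective right `R`-modules. -/
def Separative : Prop :=
  ∀ (A B : Type) [AddCommGroup A] [Module Rᵐᵒᵖ A] [AddCommGroup B] [Module Rᵐᵒᵖ B],
    Module.Finite Rᵐᵒᵖ A → Module.Projective Rᵐᵒᵖ A →
    Module.Finite Rᵐᵒᵖ B → Module.Projective Rᵐᵒᵖ B →
    Nonempty ((A × A) ≃ₗ[Rᵐᵒᵖ] (A × B)) → Nonempty ((A × B) ≃ₗ[Rᵐᵒᵖ] (B × B)) →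
    Nonempty (A ≃ₗ[Rᵐᵒᵖ] B)

/-- `a` is unit-regular. -/
def IsUnitRegular (a : R) : Prop := ∃ u : Rˣ, a = a * (u : R) * a

/-- `a` is special clean: there is an idempotent `e` with `a - e` a unit and
`aR ∩ eR = 0`. -/
def IsSpecialClean (a : R) : Prop :=
  ∃ e : R, IsIdempotentElem e ∧ IsUnit (a - e) ∧ rIdeal R a ⊓ rIdeal R e = ⊥

/-- `A ≲⊕ B`: `A` is isomorphic to a direct summand of `B` (right `R`-modules). -/
def SummandOf (A B : Type) [AddCommGroup A] [Module Rᵐᵒᵖ A]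
    [AddCommGroup B] [Module Rᵐᵒᵖ B] : Prop :=
  ∃ N N' : Submodule Rᵐᵒᵖ B, IsCompl N N' ∧ Nonempty (A ≃ₗ[Rᵐᵒᵖ] ↥N)

/-- `A ∝ B`: `A` is isomorphic to a direct summand of a finite direct sum of
copies of `B`. -/
def Propto (A B : Type) [AddCommGroup A] [Module Rᵐᵒᵖ A]
    [AddCommGroup B] [Module Rᵐᵒᵖ B] : Prop :=
  ∃ m : ℕ, 0 < m ∧ SummandOf R A (Fin m → B)

end SepExchange

open SepExchange in
/-- If `(1-a²)R` is generated by an idempotent and is contained in the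
two-sided ideal `Rr(a)`, then `(1-a²)R ∝ r(a)`. -/
theorem stmt8 (R : Type) [Ring R] (a e : R)
    (he : IsIdempotentElem e) (hgen : rIdeal R (1 - a ^ 2) = rIdeal R e)
    (hsub : ∀ x ∈ rIdeal R (1 - a ^ 2), x ∈ TwoSidedIdeal.span {x : R | a * x = 0}) :
    Propto R (↥(rIdeal R (1 - a ^ 2))) (↥(rAnn R a)) := by
  classical
  set S : Set R := {x : R | a * x = 0} with hSdef
  -- the left span of S is closed under right multiplication
  have hright : ∀ x y : R, x ∈ Submodule.span R S → x * y ∈ Submodule.span R S := by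
    intro x y hx
    induction hx using Submodule.span_induction with
    | mem z hz =>
      refine Submodule.subset_span ?_
      simp only [hSdef, Set.mem_setOf_eq] at hz ⊢
      rw [← mul_assoc, hz, zero_mul]
    | zero => simp
    | add u v _ _ hu hv => rw [add_mul]; exact Submodule.add_mem _ hu hv
    | smul r u _ hu =>
      rw [smul_eq_mul, mul_assoc, ← smul_eq_mul]
      exact Submodule.smul_mem _ r hu
  let I : TwoSidedIdeal R := TwoSidedIdeal.mk' (Submodule.span R S)
    (Submodule.zero_mem _) (fun hx hy => Submodule.add_mem _ hx hy)
    (fun hx => Submodule.neg_mem _ hx)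
    (fun {x y} hy => by
      simpa only [smul_eq_mul, SetLike.mem_coe] using Submodule.smul_mem (Submodule.span R S) x hy)
    (fun {x y} hx => hright x y hx)
  have hmemI : ∀ z : R, z ∈ I ↔ z ∈ Submodule.span R S := by
    intro z; simp [I, TwoSidedIdeal.mem_mk']
  have heM : e ∈ rIdeal R (1 - a ^ 2) := by
    rw [hgen]; exact Submodule.mem_span_singleton_self e
  have heI : e ∈ Submodule.span R S := by
    refine (hmemI e).mp (TwoSidedIdeal.mem_span_iff.mp (hsub e heM) I ?_)
    intro z hz
    exact (hmemI z).mpr (Submodule.subset_span hz)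
  obtain ⟨n, f, g, hfg⟩ := Submodule.mem_span_set'.mp heI
  set m := n + 1 with hm
  set c : Fin m → R := Fin.cons 0 f with hc
  set x : Fin m → R := Fin.cons 0 (fun i => (g i : R)) with hx
  have hann : ∀ i, a * x i = 0 := by
    intro i
    refine Fin.cases ?_ ?_ i
    · simp [hx]
    · intro j
      simp only [hx, Fin.cons_succ]
      exact (g j).2
  have hsum : ∑ i, c i * x i = e := by
    rw [Fin.sum_univ_succ]
    simp only [hc, hx, Fin.cons_zero, Fin.cons_succ, zero_mul, zero_add]
    simpa [smul_eq_mul] using hfg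
  have hey : ∀ y : R, y ∈ rIdeal R (1 - a ^ 2) → e * y = y := by
    intro y hy
    rw [hgen, rIdeal, Submodule.mem_span_singleton] at hy
    obtain ⟨d, rfl⟩ := hy
    show e * (d • e) = d • e
    rw [MulOpposite.smul_eq_mul_unop, ← mul_assoc, he]
  let ψ : (rIdeal R (1 - a ^ 2)) →ₗ[Rᵐᵒᵖ] (Fin m → rAnn R a) :=
    { toFun := fun y i => ⟨x i * (y : R), by
        show a * (x i * (y : R)) = 0
        rw [← mul_assoc, hann i, zero_mul]⟩
      map_add' := fun y z => by
        funext i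
        apply Subtype.ext
        simp [mul_add]
      map_smul' := fun r y => by
        funext i
        apply Subtype.ext
        simp [MulOpposite.smul_eq_mul_unop, mul_assoc] }
  let ρ : (Fin m → rAnn R a) →ₗ[Rᵐᵒᵖ] (rIdeal R (1 - a ^ 2)) :=
    { toFun := fun t => ⟨e * ∑ i, c i * (t i : R), by
        rw [hgen]
        exact Submodule.mem_span_singleton.mpr
          ⟨MulOpposite.op (∑ i, c i * (t i : R)), by
            simp [MulOpposite.smul_eq_mul_unop]⟩⟩
      map_add' := fun t s => by
        apply Subtype.ext
        simp [mul_add, Finset.sum_add_distrib]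
      map_smul' := fun r t => by
        apply Subtype.ext
        simp only [RingHom.id_apply, SetLike.val_smul, Pi.smul_apply,
          MulOpposite.smul_eq_mul_unop]
        simp only [← mul_assoc]
        rw [← Finset.sum_mul, ← mul_assoc] }
  have hretr : ∀ y, ρ (ψ y) = y := by
    intro y
    apply Subtype.ext
    show e * ∑ i, c i * (x i * (y : R)) = (y : R)
    have h1 : ∑ i, c i * (x i * (y : R)) = (∑ i, c i * x i) * (y : R) := by
      rw [Finset.sum_mul]
      simp [mul_assoc]
    rw [h1, hsum, ← mul_assoc, he]
    exact hey _ y.2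
  have hinj : Function.Injective ψ := Function.LeftInverse.injective hretr
  refine ⟨m, Nat.succ_pos n, LinearMap.range ψ, LinearMap.ker ρ, ⟨?_, ?_⟩,
    ⟨LinearEquiv.ofInjective ψ hinj⟩⟩
  · rw [disjoint_iff, eq_bot_iff]
    intro z hz
    obtain ⟨⟨y, rfl⟩, h2⟩ := Submodule.mem_inf.mp hz
    have hy0 : y = 0 := by
      have h3 := hretr y
      rw [LinearMap.mem_ker.mp h2] at h3
      exact h3.symm
    simp [hy0]
  · rw [codisjoint_iff, eq_top_iff]
    intro z _
    rw [Submodule.mem_sup]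
    refine ⟨ψ (ρ z), ⟨ρ z, rfl⟩, z - ψ (ρ z), ?_, by abel⟩
    rw [LinearMap.mem_ker, map_sub, hretr, sub_self]
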